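/- Any probability distribution P on a finite set X that maximizes the entropy -∑_x P(x) log P(x) subject to linear constraints ∑_x P(x) f_i(x) = d_i (for i = 1,...,k) and ∑_x P(x) = 1, with P(x) > 0 for all x, has the exponential family form P(x) = exp(μ - 1 + ∑_i λ_i f_i(x)) for some real numbers μ, λ_1, ..., λ_k. -/

import Mathlib

lemma xlogx_bound {a b : ℝ} (ha : 0 < a) (hb : 0 < b) :
    a * Real.log a - b * Real.log b ≤ (Real.log b + 1) * (a - b) + (a - b) ^ 2 / b := by
  have h1 : Real.log (a / b) ≤ a / b - 1 := Real.log_le_sub_one_of_pos (by positivity)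
  have h2 : Real.log a = Real.log b + Real.log (a / b) := by
    rw [Real.log_div ha.ne' hb.ne']; ring
  have h3 : a * Real.log (a / b) ≤ a * (a / b - 1) :=
    mul_le_mul_of_nonneg_left h1 ha.le
  have e : a * (a / b - 1) = (a - b) + (a - b) ^ 2 / b := by field_simp; ring
  calc a * Real.log a - b * Real.log b
      = (a - b) * Real.log b + a * Real.log (a / b) := by rw [h2]; ring
    _ ≤ (a - b) * Real.log b + ((a - b) + (a - b) ^ 2 / b) := by linarith
    _ = (Real.log b + 1) * (a - b) + (a - b) ^ 2 / b := by ring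

/-- Any full-support probability distribution on a finite set maximizing
entropy subject to linear constraints has exponential-family form. -/
theorem maxent_exponential_family
    {X : Type*} [Fintype X] [Nonempty X] {k : ℕ}
    (f : Fin k → X → ℝ) (d : Fin k → ℝ) (P : X → ℝ)
    (hpos : ∀ x, 0 < P x)
    (hsum : ∑ x, P x = 1)
    (hcon : ∀ i, ∑ x, P x * f i x = d i)
    (hmax : ∀ Q : X → ℝ, (∀ x, 0 ≤ Q x) → ∑ x, Q x = 1 →
      (∀ i, ∑ x, Q x * f i x = d i) →
      -∑ x, Q x * Real.log (Q x) ≤ -∑ x, P x * Real.log (P x)) :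
    ∃ (μ : ℝ) (lam : Fin k → ℝ), ∀ x, P x = Real.exp (μ - 1 + ∑ i, lam i * f i x) := by
  classical
  set L : X → ℝ := fun x => Real.log (P x) with hL
  set K : Submodule ℝ (X → ℝ) :=
    Submodule.span ℝ (insert (fun _ => (1 : ℝ)) (Set.range f)) with hK
  by_cases hmem : L ∈ K
  · -- extract coefficients
    rw [hK, Submodule.mem_span_insert] at hmem
    obtain ⟨a, z, hz, hLz⟩ := hmem
    obtain ⟨c, hc⟩ := (Submodule.mem_span_range_iff_exists_fun ℝ).mp hz
    refine ⟨a + 1, c, fun x => ?_⟩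
    have hx : Real.log (P x) = a + ∑ i, c i * f i x := by
      have h1 := congrFun hLz x
      have h2 := congrFun hc x
      simp only [hL, Pi.add_apply, Pi.smul_apply, smul_eq_mul, mul_one] at h1
      simp only [Finset.sum_apply, Pi.smul_apply, smul_eq_mul] at h2
      rw [h1, ← h2]
    have he : (a + 1) - 1 + ∑ i, c i * f i x = a + ∑ i, c i * f i x := by ring
    rw [← Real.exp_log (hpos x), hx, he]
  · exfalso
    obtain ⟨φ, hφL, hφK⟩ := Submodule.exists_dual_map_eq_bot_of_notMem hmem inferInstance
    have hφ0 : ∀ w ∈ K, φ w = 0 := by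
      intro w hw
      have : φ w ∈ K.map φ := Submodule.mem_map_of_mem hw
      rwa [hφK, Submodule.mem_bot] at this
    -- coordinate vector of φ
    set v : X → ℝ := fun x => φ (fun j => if x = j then (1 : ℝ) else 0) with hv
    have hrep : ∀ w : X → ℝ, φ w = ∑ x, w x * v x := by
      intro w
      conv_lhs => rw [pi_eq_sum_univ w]
      rw [map_sum]
      refine Finset.sum_congr rfl fun x _ => ?_
      rw [map_smul, smul_eq_mul]
    set s : ℝ := φ L with hs
    -- the perturbation direction
    set u : X → ℝ := fun x => -s * v x with hu
    have hu1 : ∑ x, u x = 0 := by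
      have h1 : φ (fun _ => (1 : ℝ)) = 0 :=
        hφ0 _ (Submodule.subset_span (Set.mem_insert _ _))
      have := hrep (fun _ => (1 : ℝ))
      simp only [one_mul] at this
      simp only [hu]
      rw [← Finset.mul_sum, ← this, h1, mul_zero]
    have hu2 : ∀ i, ∑ x, u x * f i x = 0 := by
      intro i
      have h1 : φ (f i) = 0 :=
        hφ0 _ (Submodule.subset_span (Set.mem_insert_iff.mpr (Or.inr ⟨i, rfl⟩)))
      have h2 := hrep (f i)
      have : ∑ x, u x * f i x = -s * ∑ x, f i x * v x := by
        rw [Finset.mul_sum]; refine Finset.sum_congr rfl fun x _ => ?_; simp [hu]; ring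
      rw [this, ← h2, h1, mul_zero]
    have hu3 : ∑ x, u x * L x = -s ^ 2 := by
      have h2 := hrep L
      have : ∑ x, u x * L x = -s * ∑ x, L x * v x := by
        rw [Finset.mul_sum]; refine Finset.sum_congr rfl fun x _ => ?_; simp [hu]; ring
      rw [this, ← h2, ← hs]; ring
    have hs2 : 0 < s ^ 2 := by have := abs_pos.mpr hφL; nlinarith [sq_abs s]
    -- choose epsilon
    set C : ℝ := ∑ x, u x ^ 2 / P x with hC
    have hC0 : 0 ≤ C := Finset.sum_nonneg fun x _ => div_nonneg (sq_nonneg _) (hpos x).le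
    have hXne : (Finset.univ : Finset X).Nonempty := Finset.univ_nonempty
    set m : ℝ := Finset.univ.inf' hXne (fun x => P x / (|u x| + 1)) with hm
    have hm0 : 0 < m := by
      rw [hm, Finset.lt_inf'_iff]
      intro x _
      have : 0 < |u x| + 1 := by positivity
      exact div_pos (hpos x) this
    set ε : ℝ := min (s ^ 2 / (2 * (C + 1))) (m / 2) with hε
    have hε0 : 0 < ε := lt_min (by positivity) (by positivity)
    have hεC : ε * C ≤ s ^ 2 / 2 := by
      have h1 : ε ≤ s ^ 2 / (2 * (C + 1)) := min_le_left _ _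
      have h2 : ε * C ≤ ε * (C + 1) := by nlinarith
      have h3 : ε * (C + 1) ≤ s ^ 2 / (2 * (C + 1)) * (C + 1) := by nlinarith
      have h4 : s ^ 2 / (2 * (C + 1)) * (C + 1) = s ^ 2 / 2 := by
        field_simp
      linarith
    set Q : X → ℝ := fun x => P x + ε * u x with hQ
    have hQpos : ∀ x, 0 < Q x := by
      intro x
      have h1 : ε ≤ m / 2 := min_le_right _ _
      have h2 : m ≤ P x / (|u x| + 1) := Finset.inf'_le _ (Finset.mem_univ x)
      have h3 : 0 < |u x| + 1 := by positivity
      have h4 : m * (|u x| + 1) ≤ P x := by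
        rw [div_eq_mul_inv] at h2
        calc m * (|u x| + 1) ≤ P x * (|u x| + 1)⁻¹ * (|u x| + 1) := by nlinarith
          _ = P x := by field_simp
      have h5 : ε * |u x| < P x := by nlinarith [abs_nonneg (u x)]
      have h6 : -(ε * u x) ≤ ε * |u x| := by
        rw [← mul_neg] ; exact mul_le_mul_of_nonneg_left (neg_le_abs _) hε0.le
      simp only [hQ]
      linarith
    have hQsum : ∑ x, Q x = 1 := by
      simp only [hQ]
      rw [Finset.sum_add_distrib, ← Finset.mul_sum, hu1, mul_zero, add_zero, hsum]
    have hQcon : ∀ i, ∑ x, Q x * f i x = d i := by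
      intro i
      simp only [hQ]
      have : ∀ x, (P x + ε * u x) * f i x = P x * f i x + ε * (u x * f i x) := by
        intro x; ring
      simp_rw [this]
      rw [Finset.sum_add_distrib, ← Finset.mul_sum, hu2 i, mul_zero, add_zero, hcon i]
    -- entropy comparison
    have hkey : ∑ x, Q x * Real.log (Q x) - ∑ x, P x * Real.log (P x)
        ≤ -(ε * s ^ 2) + ε ^ 2 * C := by
      rw [← Finset.sum_sub_distrib]
      have hbound : ∀ x ∈ Finset.univ, Q x * Real.log (Q x) - P x * Real.log (P x)
          ≤ (Real.log (P x) + 1) * (ε * u x) + ε ^ 2 * (u x ^ 2 / P x) := by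
        intro x _
        have := xlogx_bound (hQpos x) (hpos x)
        have e1 : Q x - P x = ε * u x := by simp [hQ]
        rw [e1] at this
        have e2 : (ε * u x) ^ 2 / P x = ε ^ 2 * (u x ^ 2 / P x) := by
          rw [mul_pow]; ring
        rw [e2] at this
        exact this
      calc ∑ x, (Q x * Real.log (Q x) - P x * Real.log (P x))
          ≤ ∑ x, ((Real.log (P x) + 1) * (ε * u x) + ε ^ 2 * (u x ^ 2 / P x)) :=
            Finset.sum_le_sum hbound
        _ = ε * (∑ x, u x * L x + ∑ x, u x) + ε ^ 2 * C := by
            rw [Finset.sum_add_distrib, ← Finset.mul_sum, hC]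
            congr 1
            rw [← Finset.sum_add_distrib, Finset.mul_sum]
            refine Finset.sum_congr rfl fun x _ => ?_
            simp only [hL]; ring
        _ = -(ε * s ^ 2) + ε ^ 2 * C := by rw [hu3, hu1, add_zero]; ring
    have hcontra := hmax Q (fun x => (hQpos x).le) hQsum hQcon
    have h1 : ∑ x, P x * Real.log (P x) ≤ ∑ x, Q x * Real.log (Q x) := by linarith
    have h2 : ε ^ 2 * C = ε * (ε * C) := by ring
    nlinarith
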